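/- Let b ≥ 2 and let D be a finite set of nonnegative integers satisfying condition (P2) with respect to b. Then D satisfies the Kenyon condition with respect to b (hence, when #D = b, D is a tile digit set). -/

import Mathlib

open Polynomial

/-- The mask polynomial `P_A(X) = ∑_{a ∈ A} X^a ∈ ℤ[X]` of a finite set of naturals. -/
noncomputable def mask (A : Finset ℕ) : Polynomial ℤ := ∑ a ∈ A, X ^ a

/-- The Kenyon condition with respect to `b`. -/
def Kenyon (b : ℕ) (D : Finset ℕ) : Prop :=
  ∀ m : ℕ, 1 ≤ m → ∃ k : ℕ, 1 ≤ k ∧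
    Polynomial.aeval (Complex.exp (2 * Real.pi * Complex.I * (m : ℂ) / (b : ℂ) ^ k)) (mask D) = 0

/-- Condition (P2): for each divisor `d > 1` of `b` there is a minimal `j₁` for which some
`Φ_t` (`t > 1`) divides both `Φ_d(X^{b^{j₁}})` and `P_D(X)`, and for every `t > 1` with
`Φ_t(X) ∣ Φ_d(X^{b^{j₁}})` there is `j₂ ≥ 0` with `Φ_t(X^{b^{j₂}}) ∣ P_D(X)`. -/
def CondP2 (b : ℕ) (D : Finset ℕ) : Prop :=
  ∀ d : ℕ, d ∣ b → 1 < d →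
    ∃ j₁ : ℕ,
      (∃ t : ℕ, 1 < t ∧ cyclotomic t ℤ ∣ (cyclotomic d ℤ).comp (X ^ b ^ j₁) ∧
        cyclotomic t ℤ ∣ mask D) ∧
      (∀ j : ℕ, (∃ t : ℕ, 1 < t ∧ cyclotomic t ℤ ∣ (cyclotomic d ℤ).comp (X ^ b ^ j) ∧
        cyclotomic t ℤ ∣ mask D) → j₁ ≤ j) ∧
      (∀ t : ℕ, 1 < t → cyclotomic t ℤ ∣ (cyclotomic d ℤ).comp (X ^ b ^ j₁) →
        ∃ j₂ : ℕ, (cyclotomic t ℤ).comp (X ^ b ^ j₂) ∣ mask D)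

/-- If `ζ` is a primitive `t`-th root of unity, `μ` a primitive `d`-th root,
and `ζ ^ N = μ`, then `Φ_t(X) ∣ Φ_d(X^N)` over `ℤ`. -/
lemma cyclo_dvd_comp_of_pow {t d N : ℕ} (ht : 0 < t) (hd : 0 < d) (ζ μ : ℂ)
    (hζ : IsPrimitiveRoot ζ t) (hμ : IsPrimitiveRoot μ d) (hpow : ζ ^ N = μ) :
    cyclotomic t ℤ ∣ (cyclotomic d ℤ).comp (X ^ N) := by
  rw [cyclotomic_eq_minpoly hζ ht]
  apply minpoly.isIntegrallyClosed_dvd (hζ.isIntegral ht)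
  rw [aeval_comp]
  have hx : (aeval ζ) ((X : Polynomial ℤ) ^ N) = μ := by
    rw [map_pow, aeval_X, hpow]
  rw [hx]
  simpa [aeval_def, eval₂_eq_eval_map, IsRoot.def] using hμ.isRoot_cyclotomic hd

/-- If `ζ` is a primitive `t`-th root of unity then `aeval ζ (cyclotomic t ℤ) = 0`. -/
lemma aeval_cyclotomic_eq_zero {t : ℕ} (ht : 0 < t) {ζ : ℂ} (hζ : IsPrimitiveRoot ζ t) :
    (aeval ζ) (cyclotomic t ℤ) = 0 := by
  rw [cyclotomic_eq_minpoly hζ ht]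
  exact minpoly.aeval ℤ ζ

theorem stmt8 (b : ℕ) (hb : 2 ≤ b) (D : Finset ℕ) (hP2 : CondP2 b D) :
    Kenyon b D := by
  intro m hm
  have hb1 : 1 < b := hb
  have hb0 : (0:ℕ) < b := by omega
  -- the order sequence
  set g : ℕ → ℕ := fun k => Nat.gcd m (b ^ k) with hgdef
  set n : ℕ → ℕ := fun k => b ^ k / g k with hndef
  have hgdvd : ∀ k, g k ∣ b ^ k := fun k => Nat.gcd_dvd_right _ _
  have hgdvdm : ∀ k, g k ∣ m := fun k => Nat.gcd_dvd_left _ _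
  have hgpos : ∀ k, 0 < g k := fun k => Nat.gcd_pos_of_pos_left _ (by omega)
  have hmul : ∀ k, g k * n k = b ^ k := fun k => Nat.mul_div_cancel' (hgdvd k)
  have hbkpos : ∀ k : ℕ, 0 < b ^ k := fun k => Nat.pow_pos hb0
  have hnpos : ∀ k, 0 < n k := by
    intro k
    rcases Nat.eq_zero_or_pos (n k) with h | h
    · exfalso; have := hmul k; rw [h, Nat.mul_zero] at this
      exact (hbkpos k).ne' this.symm
    · exact h
  -- the roots of unity
  set ζ : ℕ → ℂ := fun k => Complex.exp (2 * Real.pi * Complex.I * (m : ℂ) / (b : ℂ) ^ k)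
    with hζdef
  have hbC : (b : ℂ) ≠ 0 := Nat.cast_ne_zero.mpr (by omega)
  have hbkC : ∀ k : ℕ, ((b : ℂ)) ^ k ≠ 0 := fun k => pow_ne_zero k hbC
  -- ζ k is a primitive (n k)-th root of unity
  have hprim : ∀ k, IsPrimitiveRoot (ζ k) (n k) := by
    intro k
    have hcop : (m / g k).Coprime (n k) := Nat.coprime_div_gcd_div_gcd (hgpos k)
    have h0 : n k ≠ 0 := (hnpos k).ne'
    have key := Complex.isPrimitiveRoot_exp_of_coprime (m / g k) (n k) h0 hcop
    show IsPrimitiveRoot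
      (Complex.exp (2 * Real.pi * Complex.I * (m : ℂ) / (b : ℂ) ^ k)) (n k)
    convert key using 2
    have hnum : ((m : ℂ)) = ((g k : ℕ) : ℂ) * ((m / g k : ℕ) : ℂ) := by
      rw [← Nat.cast_mul, Nat.mul_div_cancel' (hgdvdm k)]
    have hden : ((b : ℂ)) ^ k = ((g k : ℕ) : ℂ) * ((n k : ℕ) : ℂ) := by
      rw [← Nat.cast_pow, ← hmul k, Nat.cast_mul]
    have hgC : ((g k : ℕ) : ℂ) ≠ 0 := Nat.cast_ne_zero.mpr (hgpos k).ne'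
    have hnC : ((n k : ℕ) : ℂ) ≠ 0 := Nat.cast_ne_zero.mpr (hnpos k).ne'
    rw [hnum, hden]
    field_simp
  -- compatibility: ζ (k + j) ^ (b ^ j) = ζ k
  have hcomp : ∀ k j, (ζ (k + j)) ^ (b ^ j) = ζ k := by
    intro k j
    rw [hζdef]
    simp only
    rw [← Complex.exp_nat_mul]
    congr 1
    rw [pow_add]
    push_cast
    field_simp
  -- n K = 1 iff b^K ∣ m
  have hdvd_of_one : ∀ K, n K = 1 → b ^ K ∣ m := by
    intro K h1
    have : g K = b ^ K := by have := hmul K; rwa [h1, Nat.mul_one] at this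
    rw [← this]; exact hgdvdm K
  have hone_of_dvd : ∀ K, b ^ K ∣ m → n K = 1 := by
    intro K hK
    have hg : g K = b ^ K := Nat.gcd_eq_right hK
    have h1 := hmul K
    rw [hg] at h1
    have h2 : b ^ K * n K = b ^ K * 1 := by rw [Nat.mul_one]; exact h1
    exact Nat.eq_of_mul_eq_mul_left (hbkpos K) h2
  -- existence of k with 1 < n k
  have hex : ∃ k, 1 < n k := by
    refine ⟨m, ?_⟩
    by_contra h
    have h1 : n m = 1 := by have := hnpos m; omega
    have : b ^ m ∣ m := hdvd_of_one m h1
    have hlt : m < b ^ m := Nat.lt_pow_self hb1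
    have := Nat.le_of_dvd (by omega) this
    omega
  set k₀ := Nat.find hex with hk₀def
  have hk₀ : 1 < n k₀ := Nat.find_spec hex
  have hk₀min : ∀ k, k < k₀ → ¬ (1 < n k) := fun k hk => Nat.find_min hex hk
  have hk₀pos : 1 ≤ k₀ := by
    by_contra h
    have : k₀ = 0 := by omega
    have h0 : n 0 = 1 := hone_of_dvd 0 (by simp)
    rw [this] at hk₀; omega
  -- monotonicity-at-distance: 1 < n K for all K ≥ k₀
  have hbig : ∀ K, k₀ ≤ K → 1 < n K := by
    intro K hK
    by_contra h
    have h1 : n K = 1 := by have := hnpos K; omega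
    have h2 : b ^ K ∣ m := hdvd_of_one K h1
    have h3 : b ^ k₀ ∣ m := dvd_trans (pow_dvd_pow b hK) h2
    have := hone_of_dvd k₀ h3
    omega
  -- d := n k₀ divides b
  set d := n k₀ with hddef
  have hdb : d ∣ b := by
    obtain ⟨k₁, hk₁⟩ : ∃ k₁, k₀ = k₁ + 1 := ⟨k₀ - 1, by omega⟩
    have h1 : n k₁ = 1 := by
      have := hk₀min k₁ (by omega)
      have := hnpos k₁
      omega
    have h2 : b ^ k₁ ∣ m := hdvd_of_one k₁ h1
    have h3 : b ^ k₁ ∣ g k₀ := Nat.dvd_gcd h2 (by rw [hk₁]; exact pow_dvd_pow b (by omega))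
    obtain ⟨c, hc⟩ := h3
    have : b ^ k₁ * (c * n k₀) = b ^ k₁ * b := by
      rw [← Nat.mul_assoc, ← hc, hmul k₀, hk₁, pow_succ]
    have hcb : c * n k₀ = b := Nat.eq_of_mul_eq_mul_left (hbkpos k₁) this
    exact Dvd.intro_left c hcb
  -- apply condition (P2)
  obtain ⟨j₁, -, -, h3⟩ := hP2 d hdb hk₀
  -- the element t := n (k₀ + j₁)
  set t := n (k₀ + j₁) with htdef
  have ht1 : 1 < t := hbig _ (Nat.le_add_right _ _)
  have hdvd1 : cyclotomic t ℤ ∣ (cyclotomic d ℤ).comp (X ^ b ^ j₁) :=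
    cyclo_dvd_comp_of_pow (by omega) (by omega) (ζ (k₀ + j₁)) (ζ k₀)
      (hprim _) (hprim _) (hcomp k₀ j₁)
  obtain ⟨j₂, hj₂⟩ := h3 t ht1 hdvd1
  -- conclude at level k := k₀ + j₁ + j₂
  refine ⟨k₀ + j₁ + j₂, by omega, ?_⟩
  obtain ⟨q, hq⟩ := hj₂
  have hz : (aeval (ζ (k₀ + j₁ + j₂))) ((cyclotomic t ℤ).comp (X ^ b ^ j₂)) = 0 := by
    rw [aeval_comp]
    have hx : (aeval (ζ (k₀ + j₁ + j₂))) ((X : Polynomial ℤ) ^ b ^ j₂) = ζ (k₀ + j₁) := by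
      rw [map_pow, aeval_X, hcomp (k₀ + j₁) j₂]
    rw [hx]
    exact aeval_cyclotomic_eq_zero (by omega) (hprim _)
  have : (aeval (ζ (k₀ + j₁ + j₂))) (mask D) = 0 := by
    rw [hq, map_mul, hz, zero_mul]
  exact this
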